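/- Let A, B ∈ ℂ^{n×n}, Δ_θ = A + B e^{−iθ}, and suppose there exist Hermitian positive definite matrices P, Q ∈ ℂ^{kn×kn} and, for the specific block matrices A_k, B_k, 𝒜_k, ℬ_k, L_k defined below, the matrix Ω_k(P,Q) = [A_k B_k]ᵀ(P−Q)[A_k B_k] − L_kᵀ P L_k + [𝒜_k ℬ_k]ᵀ Q [𝒜_k ℬ_k] is negative definite. Then ρ(Δ_θ) < 1 for all θ ∈ [0, 2π]. -/

import Mathlib

open Matrix Complex ComplexOrder

/-- The block upper shift matrix A_k: I_n on the block superdiagonal, zeros elsewhere. -/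
def blockShift (k n : ℕ) : Matrix (Fin k × Fin n) (Fin k × Fin n) ℂ :=
  Matrix.of fun r c => if (c.1 : ℕ) = (r.1 : ℕ) + 1 ∧ c.2 = r.2 then 1 else 0

/-- The block column B_k with I_n in the bottom block and zeros elsewhere. -/
def blockBottom (k n : ℕ) : Matrix (Fin k × Fin n) (Fin n) ℂ :=
  Matrix.of fun r c => if (r.1 : ℕ) = k - 1 ∧ r.2 = c then 1 else 0

/-- The block upper bidiagonal matrix 𝒜_k with B on the diagonal blocks and A on
the superdiagonal blocks. -/
def scriptA {n : ℕ} (k : ℕ) (A B : Matrix (Fin n) (Fin n) ℂ) :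
    Matrix (Fin k × Fin n) (Fin k × Fin n) ℂ :=
  Matrix.of fun r c =>
    if (c.1 : ℕ) = (r.1 : ℕ) then B r.2 c.2
    else if (c.1 : ℕ) = (r.1 : ℕ) + 1 then A r.2 c.2 else 0

/-- The block column ℬ_k with A in the bottom block and zeros elsewhere. -/
def scriptB {n : ℕ} (k : ℕ) (A : Matrix (Fin n) (Fin n) ℂ) :
    Matrix (Fin k × Fin n) (Fin n) ℂ :=
  Matrix.of fun r c => if (r.1 : ℕ) = k - 1 then A r.2 c else 0

/-- L_k = [I_{kn}  0]. -/
def Lmat (k n : ℕ) : Matrix (Fin k × Fin n) ((Fin k × Fin n) ⊕ Fin n) ℂ :=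
  Matrix.fromCols 1 0

/-- The matrix Ω_k(P,Q) = [A_k B_k]ᴴ(P−Q)[A_k B_k] − L_kᴴ P L_k + [𝒜_k ℬ_k]ᴴ Q [𝒜_k ℬ_k]. -/
noncomputable def Omega {n : ℕ} (k : ℕ) (A B : Matrix (Fin n) (Fin n) ℂ)
    (P Q : Matrix (Fin k × Fin n) (Fin k × Fin n) ℂ) :
    Matrix ((Fin k × Fin n) ⊕ Fin n) ((Fin k × Fin n) ⊕ Fin n) ℂ :=
  (Matrix.fromCols (blockShift k n) (blockBottom k n))ᴴ * (P - Q) *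
      Matrix.fromCols (blockShift k n) (blockBottom k n)
    - (Lmat k n)ᴴ * P * Lmat k n
    + (Matrix.fromCols (scriptA k A B) (scriptB k A))ᴴ * Q *
      Matrix.fromCols (scriptA k A B) (scriptB k A)

private lemma quadForm {m p : Type*} [Fintype m] [Fintype p] (S : Matrix m m ℂ)
    (M : Matrix m p ℂ) (x : p → ℂ) :
    star x ⬝ᵥ ((Mᴴ * S * M) *ᵥ x) = star (M *ᵥ x) ⬝ᵥ (S *ᵥ (M *ᵥ x)) := by
  rw [star_mulVec, ← dotProduct_mulVec, mulVec_mulVec, mulVec_mulVec]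

private lemma sum_single {k : ℕ} (a : Fin k) (X : Fin k → ℂ) :
    ∑ j : Fin k, (if j = a then X j else 0) = X a := by
  rw [Finset.sum_ite_eq' Finset.univ a X, if_pos (Finset.mem_univ a)]

private lemma sum_pair {k : ℕ} (a b : Fin k) (hab : a ≠ b) (X Y : Fin k → ℂ) :
    ∑ j : Fin k, (if j = a then X j else if j = b then Y j else 0) = X a + Y b := by
  have h : ∀ j : Fin k, (if j = a then X j else if j = b then Y j else 0)
      = (if j = a then X j else 0) + (if j = b then Y j else 0) := by
    intro j
    by_cases h1 : j = a
    · subst h1; rw [if_pos rfl, if_pos rfl, if_neg hab, add_zero]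
    · rw [if_neg h1, if_neg h1, zero_add]
  rw [Finset.sum_congr rfl fun j _ => h j, Finset.sum_add_distrib, sum_single, sum_single]

theorem stmt9 {n : ℕ} (k : ℕ) (hk : 1 ≤ k) (A B : Matrix (Fin n) (Fin n) ℂ)
    (P Q : Matrix (Fin k × Fin n) (Fin k × Fin n) ℂ)
    (hP : P.PosDef) (hQ : Q.PosDef) (hΩ : (-(Omega k A B P Q)).PosDef) :
    ∀ θ ∈ Set.Icc (0 : ℝ) (2 * Real.pi),
      ∀ μ ∈ spectrum ℂ (A + Complex.exp (-(θ : ℂ) * Complex.I) • B), ‖μ‖ < 1 := by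
  classical
  intro θ hθ μ hμ
  set c : ℂ := Complex.exp (-(θ : ℂ) * Complex.I) with hc
  set M : Matrix (Fin n) (Fin n) ℂ := A + c • B with hM
  -- extract an eigenvector
  rw [spectrum.mem_iff, Matrix.isUnit_iff_isUnit_det, isUnit_iff_ne_zero, not_not] at hμ
  obtain ⟨v, hv0, hv⟩ := Matrix.exists_mulVec_eq_zero_iff.mpr hμ
  have heig : M *ᵥ v = μ • v := by
    rw [Algebra.algebraMap_eq_smul_one, sub_mulVec, smul_mulVec, one_mulVec,
      sub_eq_zero] at hv
    exact hv.symm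
  have heig' : ∀ i, (A *ᵥ v) i + c * (B *ᵥ v) i = μ * v i := by
    intro i
    have h := congrFun heig i
    rw [hM, add_mulVec, smul_mulVec] at h
    simpa using h
  set e : ℂ := Complex.exp ((θ : ℂ) * Complex.I) with he
  have hce : c * e = 1 := by
    rw [hc, he, ← Complex.exp_add, show -(θ:ℂ) * Complex.I + θ * Complex.I = 0 by ring,
      Complex.exp_zero]
  have hse : star e = c := by
    rw [he, hc, Complex.star_def, ← Complex.exp_conj]
    congr 1
    simp [Complex.conj_ofReal]
  have hee : star e * e = 1 := by rw [hse, hce]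
  set f : Fin k → ℂ := fun j => Complex.exp ((((j : ℕ) : ℂ) - (k : ℕ)) * ((θ : ℂ) * Complex.I))
    with hfdef
  set w : Fin k × Fin n → ℂ := fun p => f p.1 * v p.2 with hw
  set u : (Fin k × Fin n) ⊕ Fin n → ℂ := Sum.elim w v with hu
  have hf0 : ∀ j, f j ≠ 0 := fun j => Complex.exp_ne_zero _
  have hfsucc : ∀ (j : Fin k) (h : (j : ℕ) + 1 < k), f ⟨(j : ℕ) + 1, h⟩ = e * f j := by
    intro j h
    rw [hfdef, he]
    simp only
    rw [← Complex.exp_add]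
    congr 1
    push_cast
    ring
  have hflast : ∀ j : Fin k, (j : ℕ) = k - 1 → e * f j = 1 := by
    intro j hj
    have hk' : (j : ℕ) + 1 = k := by omega
    have h2 : ((j : ℕ) : ℂ) + 1 = (k : ℂ) := by exact_mod_cast congrArg (Nat.cast : ℕ → ℂ) hk'
    have h1 : ((j : ℕ) : ℂ) - (k : ℕ) = -1 := by linear_combination h2
    rw [hfdef, he]
    simp only
    rw [h1, ← Complex.exp_add, show (θ:ℂ) * Complex.I + -1 * ((θ:ℂ) * Complex.I) = 0 by ring,
      Complex.exp_zero]
  obtain ⟨i0, hi0⟩ := Function.ne_iff.mp hv0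
  have hwne : w ≠ 0 := by
    intro h
    have := congrFun h (⟨0, hk⟩, i0)
    simp only [hw, Pi.zero_apply] at this
    exact hi0 ((mul_eq_zero.mp this).resolve_left (hf0 _))
  have hune : u ≠ 0 := by
    intro h
    exact hi0 (by simpa [hu] using congrFun h (Sum.inr i0))
  -- key identity 1
  have keyShift : Matrix.fromCols (blockShift k n) (blockBottom k n) *ᵥ u = e • w := by
    rw [hu, Matrix.fromCols_mulVec_sumElim]
    funext p
    obtain ⟨j, i⟩ := p
    simp only [Pi.add_apply, Pi.smul_apply, smul_eq_mul]
    by_cases hj : (j : ℕ) + 1 < k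
    · have h1 : (blockShift k n *ᵥ w) (j, i) = w (⟨(j : ℕ) + 1, hj⟩, i) := by
        simp only [Matrix.mulVec, dotProduct, blockShift, Matrix.of_apply]
        rw [show ∑ p : Fin k × Fin n,
            (if (p.1 : ℕ) = (j : ℕ) + 1 ∧ p.2 = i then (1:ℂ) else 0) * w p
            = ∑ p : Fin k × Fin n, (if p = (⟨(j : ℕ) + 1, hj⟩, i) then w p else 0) from
          Finset.sum_congr rfl fun p _ => by
            by_cases hp : p = (⟨(j : ℕ) + 1, hj⟩, i)
            · subst hp; simp
            · rw [if_neg hp, if_neg, zero_mul]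
              rintro ⟨ha, hb⟩
              exact hp (Prod.ext (Fin.ext ha) hb)]
        simp
      have h2 : (blockBottom k n *ᵥ v) (j, i) = 0 := by
        simp only [Matrix.mulVec, dotProduct, blockBottom, Matrix.of_apply]
        apply Finset.sum_eq_zero
        intro x _
        rw [if_neg, zero_mul]
        rintro ⟨ha, -⟩
        omega
      rw [h1, h2, add_zero, hw]
      simp only
      rw [hfsucc j hj]
      ring
    · have hj' : (j : ℕ) = k - 1 := by omega
      have h1 : (blockShift k n *ᵥ w) (j, i) = 0 := by
        simp only [Matrix.mulVec, dotProduct, blockShift, Matrix.of_apply]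
        apply Finset.sum_eq_zero
        intro x _
        rw [if_neg, zero_mul]
        rintro ⟨ha, -⟩
        have := x.1.isLt
        omega
      have h2 : (blockBottom k n *ᵥ v) (j, i) = v i := by
        simp only [Matrix.mulVec, dotProduct, blockBottom, Matrix.of_apply, hj']
        simp [ite_mul, Finset.sum_ite_eq]
      rw [h1, h2, zero_add, hw]
      simp only
      rw [show e * (f j * v i) = (e * f j) * v i by ring, hflast j hj', one_mul]
  -- key identity 2
  have keyScript : Matrix.fromCols (scriptA k A B) (scriptB k A) *ᵥ u = (e * μ) • w := by
    rw [hu, Matrix.fromCols_mulVec_sumElim]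
    funext p
    obtain ⟨j, i⟩ := p
    simp only [Pi.add_apply, Pi.smul_apply, smul_eq_mul]
    have hinner : (scriptA k A B *ᵥ w) (j, i)
        = ∑ j' : Fin k, (if (j' : ℕ) = (j : ℕ) then f j' * (B *ᵥ v) i
            else if (j' : ℕ) = (j : ℕ) + 1 then f j' * (A *ᵥ v) i else 0) := by
      simp only [Matrix.mulVec, dotProduct, scriptA, Matrix.of_apply]
      rw [Fintype.sum_prod_type]
      apply Finset.sum_congr rfl
      intro j' _
      by_cases h1 : (j' : ℕ) = (j : ℕ)
      · simp only [if_pos h1, hw, Matrix.mulVec, dotProduct, Finset.mul_sum]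
        exact Finset.sum_congr rfl fun i' _ => by ring
      · by_cases h2 : (j' : ℕ) = (j : ℕ) + 1
        · simp only [if_neg h1, if_pos h2, hw, Matrix.mulVec, dotProduct, Finset.mul_sum]
          exact Finset.sum_congr rfl fun i' _ => by ring
        · simp [if_neg h1, if_neg h2]
    by_cases hj : (j : ℕ) + 1 < k
    · have hjne : j ≠ (⟨(j : ℕ) + 1, hj⟩ : Fin k) := by
        intro h
        have : (j : ℕ) = (j : ℕ) + 1 := congrArg Fin.val h
        omega
      have hform : ∀ j' : Fin k, (if (j' : ℕ) = (j : ℕ) then f j' * (B *ᵥ v) i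
          else if (j' : ℕ) = (j : ℕ) + 1 then f j' * (A *ᵥ v) i else 0)
          = (if j' = j then f j' * (B *ᵥ v) i
            else if j' = ⟨(j : ℕ) + 1, hj⟩ then f j' * (A *ᵥ v) i else 0) := by
        intro j'
        by_cases h1 : (j' : ℕ) = (j : ℕ)
        · rw [if_pos h1, if_pos (Fin.ext h1)]
        · rw [if_neg h1, if_neg (fun h => h1 (congrArg Fin.val h))]
          by_cases h2 : (j' : ℕ) = (j : ℕ) + 1
          · rw [if_pos h2, if_pos (Fin.ext h2)]
          · rw [if_neg h2, if_neg (fun h => h2 (congrArg Fin.val h))]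
      have h1 : (scriptA k A B *ᵥ w) (j, i)
          = f j * (B *ᵥ v) i + f ⟨(j : ℕ) + 1, hj⟩ * (A *ᵥ v) i := by
        rw [hinner, Finset.sum_congr rfl fun j' _ => hform j', sum_pair j _ hjne]
      have h2 : (scriptB k A *ᵥ v) (j, i) = 0 := by
        simp only [Matrix.mulVec, dotProduct, scriptB, Matrix.of_apply]
        apply Finset.sum_eq_zero
        intro x _
        rw [if_neg, zero_mul]
        omega
      rw [h1, h2, add_zero, hfsucc j hj, hw]
      simp only
      linear_combination (e * f j) * heig' i - (f j * (B *ᵥ v) i) * hce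
    · have hj' : (j : ℕ) = k - 1 := by omega
      have hform : ∀ j' : Fin k, (if (j' : ℕ) = (j : ℕ) then f j' * (B *ᵥ v) i
          else if (j' : ℕ) = (j : ℕ) + 1 then f j' * (A *ᵥ v) i else 0)
          = (if j' = j then f j' * (B *ᵥ v) i else 0) := by
        intro j'
        by_cases h1 : (j' : ℕ) = (j : ℕ)
        · rw [if_pos h1, if_pos (Fin.ext h1)]
        · rw [if_neg h1, if_neg (fun h => h1 (congrArg Fin.val h)), if_neg]
          have := j'.isLt
          omega
      have h1 : (scriptA k A B *ᵥ w) (j, i) = f j * (B *ᵥ v) i := by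
        rw [hinner, Finset.sum_congr rfl fun j' _ => hform j', sum_single j]
      have h2 : (scriptB k A *ᵥ v) (j, i) = (A *ᵥ v) i := by
        simp only [Matrix.mulVec, dotProduct, scriptB, Matrix.of_apply, if_pos hj']
      have hfc : f j = c := by
        calc f j = (c * e) * f j := by rw [hce, one_mul]
        _ = c * (e * f j) := by ring
        _ = c := by rw [hflast j hj', mul_one]
      rw [h1, h2, hw]
      simp only
      linear_combination heig' i + ((B *ᵥ v) i - e * μ * v i) * hfc - μ * v i * hce
  -- key identity 3
  have keyL : Lmat k n *ᵥ u = w := by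
    rw [hu, Lmat, Matrix.fromCols_mulVec_sumElim, one_mulVec, zero_mulVec, add_zero]
  -- the quadratic form value
  have hval : star u ⬝ᵥ (Omega k A B P Q *ᵥ u)
      = (star μ * μ - 1) * (star w ⬝ᵥ (Q *ᵥ w)) := by
    rw [Omega, add_mulVec, sub_mulVec, dotProduct_add, dotProduct_sub,
      quadForm, quadForm, quadForm, keyShift, keyScript, keyL]
    simp only [mulVec_smul, star_smul, smul_dotProduct, dotProduct_smul, smul_eq_mul,
      sub_mulVec, dotProduct_sub, star_mul']
    linear_combination (star w ⬝ᵥ (P *ᵥ w) - star w ⬝ᵥ (Q *ᵥ w)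
      + star μ * μ * (star w ⬝ᵥ (Q *ᵥ w))) * hee
  have hlt : star u ⬝ᵥ (Omega k A B P Q *ᵥ u) < 0 := by
    have h := hΩ.dotProduct_mulVec_pos hune
    rw [neg_mulVec, dotProduct_neg] at h
    exact neg_pos.mp h
  rw [hval] at hlt
  have hq := hQ.dotProduct_mulVec_pos hwne
  -- pass to real parts
  set q : ℂ := star w ⬝ᵥ (Q *ᵥ w) with hqdef
  have hqre : 0 < q.re ∧ q.im = 0 := by
    have := Complex.lt_def.mp hq
    simpa using ⟨this.1, this.2.symm⟩
  have hμq : star μ * μ = (Complex.normSq μ : ℂ) := by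
    rw [Complex.star_def, Complex.normSq_eq_conj_mul_self]
  have hqc : q = ((q.re : ℝ) : ℂ) := by
    apply Complex.ext
    · rfl
    · simp [hqre.2]
  rw [hμq, hqc] at hlt
  have hlt' : ((Complex.normSq μ - 1) * q.re : ℝ) < 0 := by
    have : (((Complex.normSq μ - 1) * q.re : ℝ) : ℂ) < ((0 : ℝ) : ℂ) := by
      push_cast
      convert hlt using 1 <;> ring
    exact_mod_cast this
  have hns : Complex.normSq μ < 1 := by nlinarith [hqre.1]
  have habs : ‖μ‖ ^ 2 < 1 := by
    rw [Complex.sq_norm]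
    exact hns
  nlinarith [norm_nonneg μ, habs]
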